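/- For every r ≥ 1, the polynomial q(z) = 1 - 2z - z² + 2z^{r+1} - 2z^{r+2} + 2z^{2r+2} has no root in the interval (-1, 0]. -/
import Mathlib


/-- q(z) = 1 - 2z - z² + 2z^{r+1} - 2z^{r+2} + 2z^{2r+2}. -/
def qPoly (r : ℕ) (z : ℝ) : ℝ :=
  1 - 2 * z - z ^ 2 + 2 * z ^ (r + 1) - 2 * z ^ (r + 2) + 2 * z ^ (2 * r + 2)

theorem qPoly_no_root_neg (r : ℕ) (hr : 1 ≤ r) :
    ∀ z ∈ Set.Ioc (-1 : ℝ) 0, qPoly r z ≠ 0 := by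
  rintro z ⟨hz1, hz0⟩
  have habs : |z| < 1 := abs_lt.mpr ⟨hz1, lt_of_le_of_lt hz0 one_pos⟩
  have h1 : 0 < 1 - z ^ 2 := by nlinarith [abs_nonneg z, sq_abs z]
  have h2 : 0 ≤ -2 * z := by linarith
  have h3 : 0 < 1 + z ^ (r + 1) := by
    have : |z ^ (r + 1)| < 1 := by
      rw [abs_pow]; exact pow_lt_one₀ (abs_nonneg z) habs (Nat.succ_ne_zero r)
    have := neg_lt_of_abs_lt this
    linarith
  have h4 : 0 ≤ 1 - z ^ r := by
    have : |z ^ r| ≤ 1 := by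
      rw [abs_pow]; exact pow_le_one₀ (abs_nonneg z) habs.le
    have := le_of_abs_le this
    linarith
  have key : qPoly r z = (1 - z ^ 2) + (-2 * z) * ((1 + z ^ (r + 1)) * (1 - z ^ r)) := by
    have e1 : z ^ (r + 1) = z ^ r * z := pow_succ z r
    have e2 : z ^ (r + 2) = z ^ r * z ^ 2 := by ring
    have e3 : z ^ (2 * r + 2) = (z ^ r) ^ 2 * z ^ 2 := by
      rw [pow_add, two_mul, pow_add]; ring
    unfold qPoly
    rw [e1, e2, e3]
    ring
  have hpos : 0 < qPoly r z := by
    rw [key]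
    have := mul_nonneg h2 (mul_nonneg h3.le h4)
    linarith
  exact ne_of_gt hpos
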